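/- Let p ≥ 5 be a prime, and let n, m, k, i be nonnegative integers with m ≤ n, 0 ≤ k ≤ p−1 and 1 ≤ i ≤ p−1. Then C(n·p^2, m·p^2 + k·p + i) ≡ (m+1) · C(n, m+1) · C(p^2, k·p + i) (mod p^3). -/

import Mathlib

open Nat Finset

/-- If `p^2 ∣ N` and `p ∤ b` then `p^2 ∣ C(N, b)`. -/
lemma key_div {p N b : ℕ} (hp : p.Prime) (hN : p ^ 2 ∣ N) (hb : ¬ p ∣ b) :
    p ^ 2 ∣ N.choose b := by
  rcases Nat.eq_zero_or_pos b with rfl | hb0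
  · exact absurd (dvd_zero p) hb
  rcases Nat.eq_zero_or_pos N with rfl | hN0
  · simp [Nat.choose_eq_zero_of_lt hb0]
  obtain ⟨n, rfl⟩ := Nat.exists_eq_succ_of_ne_zero hN0.ne'
  obtain ⟨k, rfl⟩ := Nat.exists_eq_succ_of_ne_zero hb0.ne'
  have h := Nat.add_one_mul_choose_eq n k
  have hdvd : p ^ 2 ∣ (n + 1).choose (k + 1) * (k + 1) := by
    rw [← h]; exact hN.mul_right _
  have hcop : Nat.Coprime (p ^ 2) (k + 1) :=
    ((Nat.Prime.coprime_iff_not_dvd hp).mpr hb).pow_left _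
  exact hcop.dvd_of_dvd_mul_right hdvd

/-- If `p^2 ∣ N` and `p^2 ∤ b` then `p ∣ C(N, b)`. -/
lemma key_div2 {p N b : ℕ} (hp : p.Prime) (hN : p ^ 2 ∣ N) (hb : ¬ p ^ 2 ∣ b) :
    p ∣ N.choose b := by
  by_cases hpb : p ∣ b
  · obtain ⟨u, rfl⟩ := hpb
    have hu : ¬ p ∣ u := fun h => hb (by obtain ⟨v, rfl⟩ := h; exact ⟨v, by ring⟩)
    have hu0 : 0 < u := Nat.pos_of_ne_zero (fun h => hb (by simp [h]))
    have hb0 : 0 < p * u := Nat.mul_pos hp.pos hu0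
    rcases Nat.eq_zero_or_pos N with rfl | hN0
    · simp [Nat.choose_eq_zero_of_lt hb0]
    obtain ⟨n, rfl⟩ := Nat.exists_eq_succ_of_ne_zero hN0.ne'
    obtain ⟨k, hk⟩ := Nat.exists_eq_succ_of_ne_zero hb0.ne'
    have h := Nat.add_one_mul_choose_eq n k
    have hdvd : p ^ 2 ∣ (n + 1).choose (p * u) * (p * u) := by
      rw [hk, ← h]; exact hN.mul_right _
    have h2 : ((n + 1).choose (p * u) * u) * p = (n + 1).choose (p * u) * (p * u) := by ring
    have h3 : p * p ∣ ((n + 1).choose (p * u) * u) * p := by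
      rw [h2, ← pow_two]; exact hdvd
    have h4 : p ∣ (n + 1).choose (p * u) * u :=
      (Nat.mul_dvd_mul_iff_right hp.pos).mp h3
    exact ((Nat.Prime.coprime_iff_not_dvd hp).mpr hu).dvd_of_dvd_mul_right h4
  · exact dvd_trans (dvd_pow_self p two_ne_zero) (key_div hp hN hpb)

/-- Lucas twice: `C(n p², m p²) ≡ C(n, m) (mod p)`. -/
lemma lucas_sq {p : ℕ} (hp : p.Prime) (n m : ℕ) :
    (n * p ^ 2).choose (m * p ^ 2) ≡ n.choose m [MOD p] := by
  haveI : Fact p.Prime := ⟨hp⟩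
  have emod : ∀ a : ℕ, a * p ^ 2 % p = 0 := by
    intro a; rw [show a * p ^ 2 = p * (a * p) by ring, Nat.mul_mod_right]
  have ediv : ∀ a : ℕ, a * p ^ 2 / p = a * p := by
    intro a; rw [show a * p ^ 2 = a * p * p by ring, Nat.mul_div_cancel _ hp.pos]
  have emod' : ∀ a : ℕ, a * p % p = 0 := fun a => Nat.mul_mod_left a p
  have ediv' : ∀ a : ℕ, a * p / p = a := fun a => Nat.mul_div_cancel a hp.pos
  have L1 := Choose.choose_modEq_choose_mod_mul_choose_div_nat
    (p := p) (n := n * p ^ 2) (k := m * p ^ 2)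
  rw [emod n, emod m, ediv n, ediv m, Nat.choose_self, one_mul] at L1
  have L2 := Choose.choose_modEq_choose_mod_mul_choose_div_nat
    (p := p) (n := n * p) (k := m * p)
  rw [emod' n, emod' m, ediv' n, ediv' m, Nat.choose_self, one_mul] at L2
  exact L1.trans L2

/-- Off-diagonal Vandermonde terms vanish mod `p³`. -/
lemma off_terms {p r : ℕ} (hp : p.Prime) (hr0 : 0 < r) (hr1 : r < p ^ 2)
    (hrp : ¬ p ∣ r) (n m a b : ℕ) (hab : a + b = m * p ^ 2 + r)
    (hb0 : b ≠ 0) (hbr : b ≠ r) (hbp : b ≠ p ^ 2) :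
    p ^ 3 ∣ (n * p ^ 2).choose a * (p ^ 2).choose b := by
  rcases lt_or_ge (p ^ 2) b with hgt | hle
  · simp [Nat.choose_eq_zero_of_lt hgt]
  have hblt : b < p ^ 2 := lt_of_le_of_ne hle hbp
  have hNdvd : p ^ 2 ∣ n * p ^ 2 := ⟨n, mul_comm _ _⟩
  by_cases hpb : p ∣ b
  · -- p ∣ b : then p ∣ C(p², b) and p ∤ a hence p² ∣ C(np², a)
    have h1 : p ∣ (p ^ 2).choose b :=
      key_div2 hp dvd_rfl (fun h => hb0 (Nat.eq_zero_of_dvd_of_lt h hblt))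
    have hpa : ¬ p ∣ a := by
      intro hpa
      have hmp : p ∣ m * p ^ 2 := ⟨m * p, by ring⟩
      have hd : p ∣ r := by
        have hd2 : p ∣ a + b := hpa.add hpb
        rw [hab] at hd2
        exact (Nat.dvd_add_right hmp).mp hd2
      exact hrp hd
    have h2 : p ^ 2 ∣ (n * p ^ 2).choose a := key_div hp hNdvd hpa
    have h5 := mul_dvd_mul h2 h1
    rwa [show p ^ 2 * p = p ^ 3 by ring] at h5
  · -- p ∤ b : then p² ∣ C(p², b) and p² ∤ a hence p ∣ C(np², a)
    have h1 : p ^ 2 ∣ (p ^ 2).choose b := key_div hp dvd_rfl hpb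
    have hpa : ¬ p ^ 2 ∣ a := by
      intro hpa
      obtain ⟨t, rfl⟩ := hpa
      have ha0 : p ^ 2 * t % p ^ 2 = 0 := Nat.mul_mod_right _ _
      have e1 : (p ^ 2 * t + b) % p ^ 2 = b % p ^ 2 := by
        rw [Nat.add_mod, ha0, zero_add, Nat.mod_mod_of_dvd _ dvd_rfl]
      have e2 : (m * p ^ 2 + r) % p ^ 2 = r % p ^ 2 := by
        rw [add_comm, Nat.add_mul_mod_self_right]
      have e3 : b % p ^ 2 = r % p ^ 2 := by rw [← e1, hab, e2]
      rw [Nat.mod_eq_of_lt hblt, Nat.mod_eq_of_lt hr1] at e3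
      exact hbr e3
    have h2 : p ∣ (n * p ^ 2).choose a := key_div2 hp hNdvd hpa
    have h5 := mul_dvd_mul h2 h1
    rwa [show p * p ^ 2 = p ^ 3 by ring] at h5

/-- The middle term: `C(np², mp²)·C(p², r) ≡ C(n,m)·C(p², r)` mod `p³`. -/
lemma mid_term {p r : ℕ} (hp : p.Prime) (hrp : ¬ p ∣ r) (n m : ℕ) :
    (((n * p ^ 2).choose (m * p ^ 2) * (p ^ 2).choose r : ℕ) : ZMod (p ^ 3)) =
      ((n.choose m * (p ^ 2).choose r : ℕ) : ZMod (p ^ 3)) := by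
  obtain ⟨c, hc⟩ : p ^ 2 ∣ (p ^ 2).choose r := key_div hp dvd_rfl hrp
  obtain ⟨t, ht⟩ : (p : ℤ) ∣ (n.choose m : ℤ) - ((n * p ^ 2).choose (m * p ^ 2) : ℤ) :=
    (Nat.modEq_iff_dvd).mp (lucas_sq hp n m)
  have key : ((p ^ 3 : ℕ) : ℤ) ∣
      ((n.choose m * (p ^ 2).choose r : ℕ) : ℤ) -
      (((n * p ^ 2).choose (m * p ^ 2) * (p ^ 2).choose r : ℕ) : ℤ) := by
    push_cast [hc]
    refine ⟨t * c, ?_⟩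
    have h6 : ((n.choose m : ℤ) - ((n * p ^ 2).choose (m * p ^ 2) : ℤ)) * ((p : ℤ) ^ 2 * c)
        = (p : ℤ) * t * ((p : ℤ) ^ 2 * c) := by rw [ht]
    push_cast at h6 ⊢
    linarith [h6]
  have h7 := (ZMod.intCast_zmod_eq_zero_iff_dvd _ (p ^ 3)).mpr key
  push_cast at h7 ⊢
  linear_combination -h7

/-- Main induction. -/
lemma main_lemma {p : ℕ} (hp : p.Prime) {r : ℕ} (hr0 : 0 < r) (hr1 : r < p ^ 2)
    (hrp : ¬ p ∣ r) (n : ℕ) : ∀ m : ℕ,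
    (((n * p ^ 2).choose (m * p ^ 2 + r) : ℕ) : ZMod (p ^ 3)) =
      (((m + 1) * n.choose (m + 1) * (p ^ 2).choose r : ℕ) : ZMod (p ^ 3)) := by
  have hrne : r ≠ 0 := hr0.ne'
  have hrp2 : r ≠ p ^ 2 := hr1.ne
  have hp2ne : (0 : ℕ) ≠ p ^ 2 := (pow_pos hp.pos 2).ne
  induction n with
  | zero =>
    intro m
    rw [Nat.zero_mul, Nat.choose_eq_zero_of_lt (Nat.add_pos_right _ hr0),
      Nat.choose_eq_zero_of_lt (Nat.succ_pos m)]
    simp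
  | succ n ih =>
    intro m
    have expand : ((n + 1) * p ^ 2).choose (m * p ^ 2 + r) =
        ∑ ij ∈ Finset.HasAntidiagonal.antidiagonal (m * p ^ 2 + r),
          (n * p ^ 2).choose ij.1 * (p ^ 2).choose ij.2 := by
      rw [show (n + 1) * p ^ 2 = n * p ^ 2 + p ^ 2 by ring, Nat.add_choose_eq]
    rw [expand, Nat.cast_sum]
    cases m with
    | zero =>
      rw [Nat.zero_mul, Nat.zero_add]
      have hsub : ({(r, 0), (0, r)} : Finset (ℕ × ℕ)) ⊆ Finset.HasAntidiagonal.antidiagonal r := by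
        intro x hx
        simp only [Finset.mem_insert, Finset.mem_singleton] at hx
        rcases hx with rfl | rfl <;> simp [Finset.mem_antidiagonal]
      have hvan : ∀ x ∈ Finset.HasAntidiagonal.antidiagonal r, x ∉ ({(r, 0), (0, r)} : Finset (ℕ × ℕ)) →
          (((n * p ^ 2).choose x.1 * (p ^ 2).choose x.2 : ℕ) : ZMod (p ^ 3)) = 0 := by
        intro x hx hxT
        rw [Finset.HasAntidiagonal.mem_antidiagonal] at hx
        simp only [Finset.mem_insert, Finset.mem_singleton] at hxT
        have hb0 : x.2 ≠ 0 := by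
          intro h; apply hxT; left
          have : x.1 = r := by omega
          rw [← this, ← h]
        have hbr : x.2 ≠ r := by
          intro h; apply hxT; right
          have : x.1 = 0 := by omega
          rw [← this, ← h]
        have hbp : x.2 ≠ p ^ 2 := by
          intro h; rw [h] at hx; omega
        rw [ZMod.natCast_eq_zero_iff]
        exact off_terms hp hr0 hr1 hrp n 0 x.1 x.2 (by simpa using hx) hb0 hbr hbp
      rw [← Finset.sum_subset hsub hvan]
      rw [Finset.sum_insert (by simp [Prod.ext_iff, hrne]), Finset.sum_singleton]
      have ih0 := ih 0
      rw [Nat.zero_mul, Nat.zero_add] at ih0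
      norm_num [Nat.choose_zero_right, Nat.choose_one_right] at ih0 ⊢
      push_cast at ih0 ⊢
      linear_combination ih0
    | succ m' =>
      have hmem3 : m' * p ^ 2 + r + p ^ 2 = (m' + 1) * p ^ 2 + r := by ring
      have hsub : ({((m' + 1) * p ^ 2 + r, 0), ((m' + 1) * p ^ 2, r),
          (m' * p ^ 2 + r, p ^ 2)} : Finset (ℕ × ℕ))
          ⊆ Finset.HasAntidiagonal.antidiagonal ((m' + 1) * p ^ 2 + r) := by
        intro x hx
        simp only [Finset.mem_insert, Finset.mem_singleton] at hx
        rcases hx with rfl | rfl | rfl <;> simp [Finset.mem_antidiagonal, hmem3]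
      have hvan : ∀ x ∈ Finset.HasAntidiagonal.antidiagonal ((m' + 1) * p ^ 2 + r),
          x ∉ ({((m' + 1) * p ^ 2 + r, 0), ((m' + 1) * p ^ 2, r),
            (m' * p ^ 2 + r, p ^ 2)} : Finset (ℕ × ℕ)) →
          (((n * p ^ 2).choose x.1 * (p ^ 2).choose x.2 : ℕ) : ZMod (p ^ 3)) = 0 := by
        intro x hx hxT
        rw [Finset.HasAntidiagonal.mem_antidiagonal] at hx
        simp only [Finset.mem_insert, Finset.mem_singleton] at hxT
        have hb0 : x.2 ≠ 0 := by
          intro h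
          have hxc := hx
          rw [h, Nat.add_zero] at hxc
          exact hxT (Or.inl (by rw [Prod.ext_iff]; exact ⟨hxc, h⟩))
        have hbr : x.2 ≠ r := by
          intro h
          have hxc := hx
          rw [h] at hxc
          have h1 : x.1 = (m' + 1) * p ^ 2 := Nat.add_right_cancel hxc
          exact hxT (Or.inr (Or.inl (by rw [Prod.ext_iff]; exact ⟨h1, h⟩)))
        have hbp : x.2 ≠ p ^ 2 := by
          intro h
          have hxc := hx
          rw [h, ← hmem3] at hxc
          have h1 : x.1 = m' * p ^ 2 + r := Nat.add_right_cancel hxc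
          exact hxT (Or.inr (Or.inr (by rw [Prod.ext_iff]; exact ⟨h1, h⟩)))
        rw [ZMod.natCast_eq_zero_iff]
        exact off_terms hp hr0 hr1 hrp n (m' + 1) x.1 x.2 hx hb0 hbr hbp
      rw [← Finset.sum_subset hsub hvan]
      have hne1 : ((m' + 1) * p ^ 2 + r, 0) ∉ ({((m' + 1) * p ^ 2, r),
          (m' * p ^ 2 + r, p ^ 2)} : Finset (ℕ × ℕ)) := by
        simp [Prod.ext_iff, hrne.symm, hp2ne]
      have hne2 : ((m' + 1) * p ^ 2, r) ∉ ({(m' * p ^ 2 + r, p ^ 2)} : Finset (ℕ × ℕ)) := by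
        simp [Prod.ext_iff, hrp2]
      rw [Finset.sum_insert hne1, Finset.sum_insert hne2, Finset.sum_singleton]
      have ih1 := ih (m' + 1)
      have ih0 := ih m'
      have hmid := mid_term hp hrp n (m' + 1)
      have hch : (n + 1).choose (m' + 1 + 1) = n.choose (m' + 1) + n.choose (m' + 1 + 1) :=
        Nat.choose_succ_succ n (m' + 1)
      rw [Nat.choose_zero_right, Nat.choose_self, hch]
      push_cast at ih1 ih0 hmid ⊢
      linear_combination ih1 + ih0 + hmid

theorem stmt4 (p n m k i : ℕ) (hp : p.Prime) (hp5 : 5 ≤ p) (hmn : m ≤ n)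
    (hk : k ≤ p - 1) (hi1 : 1 ≤ i) (hi2 : i ≤ p - 1) :
    (((n * p ^ 2).choose (m * p ^ 2 + k * p + i) : ℤ)) ≡
      (m + 1) * (n.choose (m + 1)) * ((p ^ 2).choose (k * p + i))
      [ZMOD ((p : ℤ) ^ 3)] := by
  have hp1 : 1 ≤ p := hp.pos
  set r := k * p + i with hr
  have hr0 : 0 < r := by omega
  have hr1 : r < p ^ 2 := by
    have h1 : k * p + i < (k + 1) * p := by
      have : i < p := by omega
      nlinarith
    have h2 : (k + 1) * p ≤ p * p := by
      have : k + 1 ≤ p := by omega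
      exact Nat.mul_le_mul_right p this
    rw [pow_two]; omega
  have hrp : ¬ p ∣ r := by
    intro h
    have h1 : p ∣ k * p := ⟨k, mul_comm _ _⟩
    have h2 : p ∣ i := (Nat.dvd_add_right h1).mp h
    have := Nat.le_of_dvd (by omega) h2
    omega
  have hmain := main_lemma hp hr0 hr1 hrp n m
  have goal := (ZMod.intCast_eq_intCast_iff
    (((n * p ^ 2).choose (m * p ^ 2 + r) : ℕ) : ℤ)
    (((m + 1) * n.choose (m + 1) * (p ^ 2).choose r : ℕ) : ℤ) (p ^ 3)).mp (by
      push_cast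
      push_cast at hmain
      exact_mod_cast hmain)
  rw [show ((p : ℤ) ^ 3) = ((p ^ 3 : ℕ) : ℤ) by push_cast; ring]
  have hre : m * p ^ 2 + k * p + i = m * p ^ 2 + r := by omega
  rw [hre]
  push_cast at goal ⊢
  exact goal
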